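/- Let ⟨P; ⊑, C, (ω_P)⟩ be a dcpo presentation which is also a preordered Ω-algebra with all basic operations cover-stable. Then the free dcpo P̄ carries an Ω-algebra structure via the lifted operations, and every inequation s ≼ t between Ω-terms valid in P remains valid in P̄. -/
import Mathlib


section Pres
variable {P : Type*} [Preorder P]

/-- A `C`-ideal: downward closed and closed under covers. -/
def IsCIdeal (C : P → Set P → Prop) (X : Set P) : Prop :=
  (∀ x ∈ X, ∀ y, y ≤ x → y ∈ X) ∧ ∀ x U, C x U → U ⊆ X → x ∈ X

/-- The collection of `C`-ideals, ordered by inclusion. -/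
abbrev CIdl (C : P → Set P → Prop) : Type _ := {X : Set P // IsCIdeal C X}

/-- The `C`-ideal generated by a set. -/
def genC (C : P → Set P → Prop) (S : Set P) : Set P := ⋂₀ {X | IsCIdeal C X ∧ S ⊆ X}

lemma isCIdeal_sInter (C : P → Set P → Prop) (T : Set (Set P))
    (hT : ∀ X ∈ T, IsCIdeal C X) : IsCIdeal C (⋂₀ T) := by
  refine ⟨?_, ?_⟩
  · intro x hx y hyx
    rw [Set.mem_sInter] at *
    intro X hX
    exact (hT X hX).1 x (hx X hX) y hyx
  · intro x U hU hsub
    rw [Set.mem_sInter]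
    intro X hX
    exact (hT X hX).2 x U hU fun u hu => Set.mem_sInter.mp (hsub hu) X hX

lemma isCIdeal_genC (C : P → Set P → Prop) (S : Set P) : IsCIdeal C (genC C S) :=
  isCIdeal_sInter C _ fun _ hX => hX.1

lemma subset_genC (C : P → Set P → Prop) (S : Set P) : S ⊆ genC C S :=
  fun _ hs => Set.mem_sInter.mpr fun _ hX => hX.2 hs

noncomputable instance instInfCIdl (C : P → Set P → Prop) : InfSet (CIdl C) :=
  ⟨fun S => ⟨⋂₀ (Subtype.val '' S),
    isCIdeal_sInter C _ (by rintro X ⟨Y, _, rfl⟩; exact Y.2)⟩⟩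

noncomputable instance instCompleteLatticeCIdl (C : P → Set P → Prop) :
    CompleteLattice (CIdl C) :=
  completeLatticeOfInf _ (by
    intro S
    constructor
    · intro X hX
      exact fun a ha => Set.mem_sInter.mp ha X.1 ⟨X, hX, rfl⟩
    · intro Y hY a ha
      refine Set.mem_sInter.mpr ?_
      rintro Z ⟨X, hX, rfl⟩
      exact hY hX ha)

/-- The natural map `x ↦ ⟨x⟩` from a presentation into its `C`-ideals. -/
def etaC (C : P → Set P → Prop) (x : P) : CIdl C := ⟨genC C {x}, isCIdeal_genC C _⟩

/-- The free dcpo over a dcpo presentation: the least family of `C`-ideals containing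
all principal `C`-ideals and closed under directed joins. -/
def OverC (C : P → Set P → Prop) : Set (CIdl C) :=
  ⋂₀ {Y | (∀ x, etaC C x ∈ Y) ∧
      ∀ S ⊆ Y, S.Nonempty → DirectedOn (· ≤ ·) S → sSup S ∈ Y}

end Pres

section Filt
variable {A : Type*}

/-- `F` is a filter: nonempty, upward closed, downward directed. -/
def IsFilt [Preorder A] (F : Set A) : Prop :=
  F.Nonempty ∧ (∀ a ∈ F, ∀ b, a ≤ b → b ∈ F) ∧
    ∀ a ∈ F, ∀ b ∈ F, ∃ c ∈ F, c ≤ a ∧ c ≤ b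

/-- `I` is an ideal: nonempty, downward closed, upward directed. -/
def IsIdl [Preorder A] (I : Set A) : Prop :=
  I.Nonempty ∧ (∀ a ∈ I, ∀ b, b ≤ a → b ∈ I) ∧
    ∀ a ∈ I, ∀ b ∈ I, ∃ c ∈ I, a ≤ c ∧ b ≤ c

/-- The free co-directed meet completion of `A`: filters ordered by reverse inclusion. -/
def FComp (A : Type u) [Preorder A] : Type u := {F : Set A // IsFilt F}

instance [Preorder A] : PartialOrder (FComp A) where
  le x y := y.1 ⊆ x.1
  le_refl x := subset_rfl
  le_trans x y z h1 h2 := Set.Subset.trans h2 h1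
  le_antisymm x y h1 h2 := Subtype.ext (subset_antisymm h2 h1)

/-- The embedding `↑ : A → ℱ(A)` sending `a` to the principal filter. -/
def pf [Preorder A] (a : A) : FComp A :=
  ⟨{b | a ≤ b}, ⟨a, le_refl a⟩, fun x hx b hb => le_trans hx hb,
    fun x hx y hy => ⟨a, le_refl a, hx, hy⟩⟩

noncomputable instance [Lattice A] [BoundedOrder A] : InfSet (FComp A) :=
  ⟨fun S => ⟨⋂₀ {F | IsFilt F ∧ ∀ x ∈ S, x.1 ⊆ F}, by
    refine ⟨⟨⊤, ?_⟩, ?_, ?_⟩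
    · refine Set.mem_sInter.mpr ?_
      rintro F ⟨⟨⟨w, hw⟩, hup, _⟩, _⟩
      exact hup w hw ⊤ le_top
    · intro a ha b hab
      refine Set.mem_sInter.mpr fun F hF => ?_
      exact hF.1.2.1 a (Set.mem_sInter.mp ha F hF) b hab
    · intro a ha b hb
      refine ⟨a ⊓ b, ?_, inf_le_left, inf_le_right⟩
      refine Set.mem_sInter.mpr fun F hF => ?_
      obtain ⟨c, hc, hca, hcb⟩ :=
        hF.1.2.2 a (Set.mem_sInter.mp ha F hF) b (Set.mem_sInter.mp hb F hF)
      exact hF.1.2.1 c hc (a ⊓ b) (le_inf hca hcb)⟩⟩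

noncomputable instance [Lattice A] [BoundedOrder A] : CompleteLattice (FComp A) :=
  completeLatticeOfInf _ (by
    intro S
    constructor
    · intro x hx
      show x.1 ⊆ (sInf S).1
      intro a ha
      exact Set.mem_sInter.mpr fun F hF => hF.2 x hx ha
    · intro y hY
      show (sInf S).1 ⊆ y.1
      intro a ha
      exact Set.mem_sInter.mp ha y.1 ⟨y.2, fun x hx => hY hx⟩)

/-- The lifting of a monotone map to the filter completions. -/
def liftF {ι : Type*} {A : ι → Type*} {B : Type*} [∀ i, Preorder (A i)] [Preorder B]
    (f : (∀ i, A i) → B) (hf : Monotone f) (x : ∀ i, FComp (A i)) : FComp B :=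
  ⟨{b | ∃ a : ∀ i, A i, (∀ i, a i ∈ (x i).1) ∧ f a ≤ b}, by
    refine ⟨?_, ?_, ?_⟩
    · exact ⟨f (fun i => ((x i).2.1).choose), fun i => ((x i).2.1).choose,
        fun i => ((x i).2.1).choose_spec, le_rfl⟩
    · rintro b ⟨a, ha, hab⟩ c hbc
      exact ⟨a, ha, hab.trans hbc⟩
    · rintro b ⟨a1, ha1, h1⟩ c ⟨a2, ha2, h2⟩
      choose g hg hga1 hga2 using fun i => (x i).2.2.2 (a1 i) (ha1 i) (a2 i) (ha2 i)
      exact ⟨f g, ⟨g, hg, le_rfl⟩, (hf fun i => hga1 i).trans h1,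
        (hf fun i => hga2 i).trans h2⟩⟩

/-- The co-Scott continuous extension of binary join to the filter completion. -/
def supF [Lattice A] (x y : FComp A) : FComp A :=
  liftF (A := fun _ : Fin 2 => A) (fun a => a 0 ⊔ a 1)
    (fun _ _ hab => sup_le_sup (hab 0) (hab 1)) ![x, y]

/-- The co-Scott continuous extension of binary meet to the filter completion. -/
def infF [Lattice A] (x y : FComp A) : FComp A :=
  liftF (A := fun _ : Fin 2 => A) (fun a => a 0 ⊓ a 1)
    (fun _ _ hab => inf_le_inf (hab 0) (hab 1)) ![x, y]

/-- A map is co-Scott continuous if it preserves meets of nonempty co-directed sets. -/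
def CoScottCont {α β : Type*} [Preorder α] [Preorder β] (g : α → β) : Prop :=
  ∀ S : Set α, S.Nonempty → DirectedOn (· ≥ ·) S → ∀ x, IsGLB S x → IsGLB (g '' S) (g x)

/-- A map is Scott continuous if it preserves joins of nonempty directed sets. -/
def ScottContOn {α β : Type*} [Preorder α] [Preorder β] (T : Set α) (g : α → β) : Prop :=
  ∀ S ⊆ T, S.Nonempty → DirectedOn (· ≤ ·) S → ∀ x, IsLUB S x → IsLUB (g '' S) (g x)

/-- The covering relation `C_A` of the dcpo presentation `Δ(A)` on `ℱ(A)`. -/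
def covD [Preorder A] (x : FComp A) (U : Set (FComp A)) : Prop :=
  U.Nonempty ∧ DirectedOn (· ≤ ·) U ∧
    ∀ I : Set A, IsIdl I → (∀ x' ∈ U, ∃ a' ∈ I, x' ≤ pf a') → ∃ a ∈ I, x ≤ pf a

/-- `e : A → C` is a canonical extension: a dense and compact lattice completion. -/
def IsCanExt {A C : Type*} [Lattice A] [CompleteLattice C] (e : A → C) : Prop :=
  (∀ a b, e a ≤ e b ↔ a ≤ b) ∧
  (∀ a b, e (a ⊔ b) = e a ⊔ e b) ∧
  (∀ a b, e (a ⊓ b) = e a ⊓ e b) ∧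
  (∀ u v : C, ¬ u ≤ v → ∃ F I : Set A, IsFilt F ∧ IsIdl I ∧
    sInf (e '' F) ≤ u ∧ ¬ sInf (e '' F) ≤ v ∧ v ≤ sSup (e '' I) ∧ ¬ u ≤ sSup (e '' I)) ∧
  (∀ F I : Set A, IsFilt F → IsIdl I → sInf (e '' F) ≤ sSup (e '' I) →
    ∃ b ∈ F, ∃ a ∈ I, b ≤ a)

/-- `f` is an operator: it preserves binary joins in each coordinate. -/
def IsOperator {ι : Type*} [DecidableEq ι] {A : ι → Type*} {B : Type*}
    [∀ i, Lattice (A i)] [Lattice B] (f : (∀ i, A i) → B) : Prop :=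
  ∀ (a : ∀ i, A i) (i : ι) (b : A i),
    f (Function.update a i (a i ⊔ b)) = f a ⊔ f (Function.update a i b)

end Filt

section Terms

/-- Terms over a signature `Ω` with arities `ar`, in `n` variables. -/
inductive OTerm (Ω : Type*) (ar : Ω → ℕ) (n : ℕ) : Type _ where
  | var : Fin n → OTerm Ω ar n
  | op : (ω : Ω) → (Fin (ar ω) → OTerm Ω ar n) → OTerm Ω ar n

/-- Evaluation of a term under an interpretation of the operation symbols. -/
def evalT {Ω : Type*} {ar : Ω → ℕ} {n : ℕ} {A : Type*}
    (interp : ∀ ω, (Fin (ar ω) → A) → A) (v : Fin n → A) : OTerm Ω ar n → A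
  | .var i => v i
  | .op ω args => interp ω (fun j => evalT interp v (args j))

end Terms

/-- The lifting of a `k`-ary operation on `P` to the C-ideals. -/
def opLift {P : Type*} [Preorder P] (C : P → Set P → Prop) {k : ℕ}
    (g : (Fin k → P) → P) (X : Fin k → CIdl C) : CIdl C :=
  ⟨genC C {b | ∃ x : Fin k → P, (∀ i, x i ∈ (X i).1) ∧ b = g x}, isCIdeal_genC C _⟩

section AuxLemmas
variable {P : Type*} [Preorder P] {C : P → Set P → Prop}

lemma genC_min {S Y : Set P} (hY : IsCIdeal C Y) (hSY : S ⊆ Y) : genC C S ⊆ Y :=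
  Set.sInter_subset_of_mem ⟨hY, hSY⟩

lemma etaC_le_iff {a : P} {Y : CIdl C} : etaC C a ≤ Y ↔ a ∈ Y.1 := by
  constructor
  · intro h; exact h (subset_genC C {a} (Set.mem_singleton a))
  · intro h; exact genC_min Y.2 (by simpa using h)

lemma etaC_mono {a b : P} (h : a ≤ b) : etaC C a ≤ etaC C b := by
  rw [etaC_le_iff]
  exact (isCIdeal_genC C {b}).1 b (subset_genC C {b} (Set.mem_singleton b)) a h

lemma sSup_val (𝒮 : Set (CIdl C)) :
    (sSup 𝒮).1 = genC C (⋃₀ (Subtype.val '' 𝒮)) := by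
  have h1 : IsLUB 𝒮 ⟨genC C (⋃₀ (Subtype.val '' 𝒮)), isCIdeal_genC C _⟩ := by
    constructor
    · intro X hX
      exact fun a ha => subset_genC C _ ⟨X.1, ⟨X, hX, rfl⟩, ha⟩
    · intro Y hY
      refine genC_min Y.2 ?_
      rintro a ⟨_, ⟨X, hX, rfl⟩, ha⟩
      exact hY hX ha
  exact congrArg Subtype.val ((isLUB_sSup 𝒮).unique h1)

lemma genLift {k : ℕ} {g : (Fin k → P) → P} (hg : Monotone g)
    (hst : ∀ (x : Fin k → P) (i : Fin k) (U : Set P), C (x i) U →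
      C (g x) ((fun y => g (Function.update x i y)) '' U))
    (S : Fin k → Set P) {Y : Set P} (hY : IsCIdeal C Y)
    (hbase : ∀ x, (∀ i, x i ∈ S i) → g x ∈ Y) :
    ∀ y, (∀ i, y i ∈ genC C (S i)) → g y ∈ Y := by
  suffices h : ∀ tt : Finset (Fin k), ∀ y, (∀ i ∈ tt, y i ∈ genC C (S i)) →
      (∀ i ∉ tt, y i ∈ S i) → g y ∈ Y by
    intro y hy
    exact h Finset.univ y (fun i _ => hy i) (fun i hi => absurd (Finset.mem_univ i) hi)
  intro tt
  induction tt using Finset.induction with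
  | empty => intro y _ h2; exact hbase y fun i => h2 i (Finset.notMem_empty i)
  | @insert a tt' ha ih =>
    intro y h1 h2
    have hD : IsCIdeal C {z | g (Function.update y a z) ∈ Y} := by
      constructor
      · intro z hz z' hz'
        refine hY.1 _ hz _ (hg ?_)
        intro i
        by_cases hi : i = a
        · subst hi; simpa using hz'
        · simp [Function.update_of_ne hi]
      · intro z U hU hsub
        have hcov := hst (Function.update y a z) a U (by simpa using hU)
        simp only [Function.update_idem] at hcov
        refine hY.2 _ _ hcov ?_
        rintro _ ⟨w, hw, rfl⟩
        exact hsub hw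
    have hSa : S a ⊆ {z | g (Function.update y a z) ∈ Y} := by
      intro z hz
      refine ih (Function.update y a z) ?_ ?_
      · intro i hi
        have hia : i ≠ a := fun h => ha (h ▸ hi)
        rw [Function.update_of_ne hia]
        exact h1 i (Finset.mem_insert_of_mem hi)
      · intro i hi
        rcases eq_or_ne i a with rfl | hia
        · simpa using hz
        · rw [Function.update_of_ne hia]
          exact h2 i (by simp [Finset.mem_insert, hia, hi])
    have hmem : y a ∈ {z | g (Function.update y a z) ∈ Y} :=
      genC_min hD hSa (h1 a (Finset.mem_insert_self a tt'))
    simpa [Function.update_eq_self] using hmem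

lemma opLift_le_iff {k : ℕ} {g : (Fin k → P) → P} {X : Fin k → CIdl C} {Y : CIdl C} :
    opLift C g X ≤ Y ↔ ∀ x : Fin k → P, (∀ i, x i ∈ (X i).1) → g x ∈ Y.1 := by
  constructor
  · intro h x hx; exact h (subset_genC C _ ⟨x, hx, rfl⟩)
  · intro h; refine genC_min Y.2 ?_; rintro b ⟨x, hx, rfl⟩; exact h x hx

lemma opLift_mono {k : ℕ} {g : (Fin k → P) → P} {X X' : Fin k → CIdl C}
    (h : ∀ i, X i ≤ X' i) : opLift C g X ≤ opLift C g X' := by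
  rw [opLift_le_iff]
  intro x hx
  exact subset_genC C _ ⟨x, fun i => h i (hx i), rfl⟩

lemma opLift_etaC {k : ℕ} {g : (Fin k → P) → P} (hg : Monotone g)
    (hst : ∀ (x : Fin k → P) (i : Fin k) (U : Set P), C (x i) U →
      C (g x) ((fun y => g (Function.update x i y)) '' U))
    (x : Fin k → P) :
    opLift C g (fun i => etaC C (x i)) = etaC C (g x) := by
  apply le_antisymm
  · rw [opLift_le_iff]
    intro y hy
    refine genLift hg hst (fun i => {x i}) (isCIdeal_genC C {g x}) ?_ y hy
    intro z hz
    have : z = x := funext fun i => Set.mem_singleton_iff.mp (hz i)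
    subst this
    exact subset_genC C _ (Set.mem_singleton _)
  · rw [etaC_le_iff]
    exact subset_genC C _ ⟨x, fun i => subset_genC C _ (Set.mem_singleton _), rfl⟩

lemma dir_bound {α : Type*} [Preorder α] {S : Set α} (hne : S.Nonempty)
    (hdir : DirectedOn (· ≤ ·) S) :
    ∀ {k : ℕ} (f : Fin k → α), (∀ j, f j ∈ S) → ∃ z ∈ S, ∀ j, f j ≤ z := by
  intro k
  induction k with
  | zero => intro f _; obtain ⟨z, hz⟩ := hne; exact ⟨z, hz, fun j => j.elim0⟩
  | succ m ih =>
    intro f hf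
    obtain ⟨z, hz, hle⟩ := ih (fun j => f j.succ) (fun j => hf _)
    obtain ⟨w, hw, h1, h2⟩ := hdir (f 0) (hf 0) z hz
    refine ⟨w, hw, fun j => ?_⟩
    rcases Fin.eq_zero_or_eq_succ j with h | ⟨j', rfl⟩
    · subst h; exact h1
    · exact (hle j').trans h2

lemma opLift_isLUB {k : ℕ} {g : (Fin k → P) → P} (hg : Monotone g)
    (hst : ∀ (x : Fin k → P) (i : Fin k) (U : Set P), C (x i) U →
      C (g x) ((fun y => g (Function.update x i y)) '' U))
    (h : Fin k → CIdl C → CIdl C) (hm : ∀ j, Monotone (h j))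
    {S : Set (CIdl C)} (hne : S.Nonempty) (hdir : DirectedOn (· ≤ ·) S)
    {L : CIdl C} (hL : ∀ j, IsLUB ((h j) '' S) (h j L)) :
    IsLUB ((fun Z => opLift C g (fun j => h j Z)) '' S)
      (opLift C g (fun j => h j L)) := by
  constructor
  · rintro _ ⟨Z, hZ, rfl⟩
    exact opLift_mono fun j => (hL j).1 ⟨Z, hZ, rfl⟩
  · intro W hW
    rw [opLift_le_iff]
    intro y hy
    have hT : ∀ j, (h j L).1 = genC C (⋃₀ (Subtype.val '' (h j '' S))) := by
      intro j
      have heq : h j L = sSup (h j '' S) := (hL j).unique (isLUB_sSup _)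
      rw [heq, sSup_val]
    refine genLift hg hst (fun j => ⋃₀ (Subtype.val '' (h j '' S))) W.2 ?_ y
      (fun j => by rw [← hT j]; exact hy j)
    intro x hx
    have hex : ∀ j, ∃ Z ∈ S, x j ∈ (h j Z).1 := by
      intro j
      obtain ⟨_, ⟨_, ⟨Z, hZ, rfl⟩, rfl⟩, hmem⟩ := hx j
      exact ⟨Z, hZ, hmem⟩
    choose Zf hZf hmemf using hex
    obtain ⟨Z, hZ, hle⟩ := dir_bound hne hdir Zf hZf
    have hxZ : ∀ j, x j ∈ (h j Z).1 := fun j => (hm j (hle j)) (hmemf j)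
    exact hW ⟨Z, hZ, rfl⟩ (subset_genC C _ ⟨x, hxZ, rfl⟩)

lemma etaC_mem_OverC (x : P) : etaC C x ∈ OverC C :=
  Set.mem_sInter.mpr fun _ hY => hY.1 x

lemma sSup_mem_OverC {S : Set (CIdl C)} (hS : S ⊆ OverC C) (hne : S.Nonempty)
    (hdir : DirectedOn (· ≤ ·) S) : sSup S ∈ OverC C :=
  Set.mem_sInter.mpr fun Y hY =>
    hY.2 S (fun Z hZ => Set.mem_sInter.mp (hS hZ) Y hY) hne hdir

lemma OverC_subset {Y : Set (CIdl C)} (h1 : ∀ x, etaC C x ∈ Y)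
    (h2 : ∀ S ⊆ Y, S.Nonempty → DirectedOn (· ≤ ·) S → sSup S ∈ Y) :
    OverC C ⊆ Y :=
  Set.sInter_subset_of_mem ⟨h1, h2⟩

lemma update_mono' {k : ℕ} {V : Fin k → CIdl C} {a : Fin k} {Z Z' : CIdl C}
    (h : Z ≤ Z') : ∀ j, Function.update V a Z j ≤ Function.update V a Z' j := by
  intro j
  rcases eq_or_ne j a with rfl | hj
  · simpa using h
  · simp [Function.update_of_ne hj]

lemma update_isLUB {k : ℕ} (V : Fin k → CIdl C) (a j : Fin k) {S : Set (CIdl C)}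
    (hne : S.Nonempty) :
    IsLUB ((fun Z => Function.update V a Z j) '' S)
      (Function.update V a (sSup S) j) := by
  rcases eq_or_ne j a with rfl | hj
  · simp only [Function.update_self, Set.image_id']
    exact isLUB_sSup S
  · simp only [Function.update_of_ne hj]
    rw [hne.image_const]
    exact isLUB_singleton

section EvalAux
variable {Ω : Type*} {ar : Ω → ℕ} {interp : ∀ ω, (Fin (ar ω) → P) → P}

lemma evalT_mono' {n : ℕ} (s : OTerm Ω ar n) {V V' : Fin n → CIdl C}
    (h : ∀ i, V i ≤ V' i) :
    evalT (fun ω => opLift C (interp ω)) V s ≤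
      evalT (fun ω => opLift C (interp ω)) V' s := by
  induction s with
  | var i => exact h i
  | op ω args ih => exact opLift_mono fun j => ih j

lemma evalT_etaC {n : ℕ} (hmono : ∀ ω, Monotone (interp ω))
    (hstab : ∀ ω (x : Fin (ar ω) → P) (i : Fin (ar ω)) (U : Set P), C (x i) U →
      C (interp ω x) ((fun y => interp ω (Function.update x i y)) '' U))
    (s : OTerm Ω ar n) (v : Fin n → P) :
    evalT (fun ω => opLift C (interp ω)) (fun i => etaC C (v i)) s
      = etaC C (evalT interp v s) := by
  induction s with
  | var i => rfl
  | op ω args ih =>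
    show opLift C (interp ω)
        (fun j => evalT (fun ω => opLift C (interp ω)) (fun i => etaC C (v i)) (args j)) = _
    rw [show (fun j => evalT (fun ω => opLift C (interp ω)) (fun i => etaC C (v i)) (args j))
        = fun j => etaC C (evalT interp v (args j)) from funext ih]
    exact opLift_etaC (hmono ω) (hstab ω) (fun j => evalT interp v (args j))

lemma evalT_isLUB {n : ℕ} (hmono : ∀ ω, Monotone (interp ω))
    (hstab : ∀ ω (x : Fin (ar ω) → P) (i : Fin (ar ω)) (U : Set P), C (x i) U →
      C (interp ω x) ((fun y => interp ω (Function.update x i y)) '' U))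
    (s : OTerm Ω ar n) (V : Fin n → CIdl C) (a : Fin n)
    {S : Set (CIdl C)} (hne : S.Nonempty) (hdir : DirectedOn (· ≤ ·) S) :
    IsLUB ((fun Z => evalT (fun ω => opLift C (interp ω)) (Function.update V a Z) s) '' S)
      (evalT (fun ω => opLift C (interp ω)) (Function.update V a (sSup S)) s) := by
  induction s with
  | var j => exact update_isLUB V a j hne
  | op ω args ih =>
    exact opLift_isLUB (hmono ω) (hstab ω)
      (fun j Z => evalT (fun ω => opLift C (interp ω)) (Function.update V a Z) (args j))
      (fun j _ _ hZ => evalT_mono' (args j) (update_mono' hZ))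
      hne hdir (fun j => ih j)

end EvalAux
end AuxLemmas

/-- for a dcpo presentation which is also a preordered Ω-algebra with
cover-stable operations, the free dcpo carries the lifted Ω-algebra structure and every
inequation between Ω-terms valid in `P` remains valid in `P̄`. -/
theorem statement4 {P : Type*} [Preorder P] (C : P → Set P → Prop)
    (hC : ∀ x U, C x U → U.Nonempty ∧ DirectedOn (· ≤ ·) U)
    {Ω : Type*} {ar : Ω → ℕ} (interp : ∀ ω, (Fin (ar ω) → P) → P)
    (hmono : ∀ ω, Monotone (interp ω))
    (hstab : ∀ ω (x : Fin (ar ω) → P) (i : Fin (ar ω)) (U : Set P), C (x i) U →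
      C (interp ω x) ((fun y => interp ω (Function.update x i y)) '' U))
    {n : ℕ} (s t : OTerm Ω ar n) :
    (∀ ω (X : Fin (ar ω) → CIdl C), (∀ i, X i ∈ OverC C) →
      opLift C (interp ω) X ∈ OverC C) ∧
    ((∀ v : Fin n → P, evalT interp v s ≤ evalT interp v t) →
      ∀ V : Fin n → CIdl C, (∀ i, V i ∈ OverC C) →
        evalT (fun ω => opLift C (interp ω)) V s ≤
          evalT (fun ω => opLift C (interp ω)) V t) := by 
  constructor
  · intro ω X hX
    have claim : ∀ tt : Finset (Fin (ar ω)), ∀ X : Fin (ar ω) → CIdl C,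
        (∀ i ∈ tt, X i ∈ OverC C) → (∀ i ∉ tt, ∃ x, X i = etaC C x) →
        opLift C (interp ω) X ∈ OverC C := by
      intro tt
      induction tt using Finset.induction with
      | empty =>
        intro X _ h2
        choose x hx using fun i => h2 i (Finset.notMem_empty i)
        rw [show X = fun i => etaC C (x i) from funext hx,
          opLift_etaC (hmono ω) (hstab ω)]
        exact etaC_mem_OverC _
      | @insert a tt' ha ih =>
        intro X h1 h2
        have key : OverC C ⊆
            {Z | opLift C (interp ω) (Function.update X a Z) ∈ OverC C} := by
          apply OverC_subset
          · intro x
            apply ih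
            · intro i hi
              have hia : i ≠ a := fun h => ha (h ▸ hi)
              rw [Function.update_of_ne hia]
              exact h1 i (Finset.mem_insert_of_mem hi)
            · intro i hi
              rcases eq_or_ne i a with rfl | hia
              · exact ⟨x, Function.update_self ..⟩
              · rw [Function.update_of_ne hia]
                exact h2 i (by simp [Finset.mem_insert, hia, hi])
          · intro S hS hne hdir
            have hlub := opLift_isLUB (hmono ω) (hstab ω)
              (fun j Z => Function.update X a Z j)
              (fun j _ _ hZ => update_mono' hZ j) hne hdir
              (fun j => update_isLUB X a j hne)
            have heq : opLift C (interp ω) (Function.update X a (sSup S))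
                = sSup ((fun Z => opLift C (interp ω)
                    (fun j => Function.update X a Z j)) '' S) :=
              hlub.unique (isLUB_sSup _)
            show opLift C (interp ω) (Function.update X a (sSup S)) ∈ OverC C
            rw [heq]
            refine sSup_mem_OverC ?_ (hne.image _) ?_
            · rintro _ ⟨Z, hZ, rfl⟩
              exact hS hZ
            · rintro _ ⟨Z1, hZ1, rfl⟩ _ ⟨Z2, hZ2, rfl⟩
              obtain ⟨Z, hZ, l1, l2⟩ := hdir Z1 hZ1 Z2 hZ2
              exact ⟨_, ⟨Z, hZ, rfl⟩, opLift_mono (fun j => update_mono' l1 j),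
                opLift_mono (fun j => update_mono' l2 j)⟩
        have hfin := key (h1 a (Finset.mem_insert_self a tt'))
        simpa [Function.update_eq_self] using hfin
    exact claim Finset.univ X (fun i _ => hX i)
      (fun i hi => absurd (Finset.mem_univ i) hi)
  · intro hval V hV
    have claim : ∀ tt : Finset (Fin n), ∀ V : Fin n → CIdl C,
        (∀ i ∈ tt, V i ∈ OverC C) → (∀ i ∉ tt, ∃ x, V i = etaC C x) →
        evalT (fun ω => opLift C (interp ω)) V s ≤
          evalT (fun ω => opLift C (interp ω)) V t := by
      intro tt
      induction tt using Finset.induction with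
      | empty =>
        intro V _ h2
        choose v hv using fun i => h2 i (Finset.notMem_empty i)
        rw [show V = fun i => etaC C (v i) from funext hv,
          evalT_etaC hmono hstab s v, evalT_etaC hmono hstab t v]
        exact etaC_mono (hval v)
      | @insert a tt' ha ih =>
        intro V h1 h2
        have key : OverC C ⊆
            {Z | evalT (fun ω => opLift C (interp ω)) (Function.update V a Z) s ≤
              evalT (fun ω => opLift C (interp ω)) (Function.update V a Z) t} := by
          apply OverC_subset
          · intro x
            apply ih
            · intro i hi
              have hia : i ≠ a := fun h => ha (h ▸ hi)
              rw [Function.update_of_ne hia]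
              exact h1 i (Finset.mem_insert_of_mem hi)
            · intro i hi
              rcases eq_or_ne i a with rfl | hia
              · exact ⟨x, Function.update_self ..⟩
              · rw [Function.update_of_ne hia]
                exact h2 i (by simp [Finset.mem_insert, hia, hi])
          · intro S hS hne hdir
            have hs := evalT_isLUB hmono hstab s V a hne hdir
            show evalT (fun ω => opLift C (interp ω)) (Function.update V a (sSup S)) s ≤
              evalT (fun ω => opLift C (interp ω)) (Function.update V a (sSup S)) t
            apply hs.2
            rintro _ ⟨Z, hZ, rfl⟩
            exact le_trans (hS hZ)
              (evalT_mono' t (fun j => update_mono' (le_sSup hZ) j))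
        have hfin := key (h1 a (Finset.mem_insert_self a tt'))
        simpa [Function.update_eq_self] using hfin
    exact claim Finset.univ V (fun i _ => hV i)
      (fun i hi => absurd (Finset.mem_univ i) hi)
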